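/- Let (B, G) be an MV-pair. Then every element of L⁺(a,b) = {g(a) ∧ f(b) : f, g ∈ G} lies below a maximal element of L⁺(a,b). -/
import Mathlib


/-- An effect algebra: a partial algebra `(α; ⊕, 0, 1)`.  The partial operation is
encoded by a total function `add` together with a definedness predicate `D`. -/
structure EffectAlgebra (α : Type*) where
  D : α → α → Prop
  add : α → α → α
  zero : α
  one : α
  comm_def : ∀ a b, D a b → D b a
  comm : ∀ a b, D a b → add a b = add b a
  assoc_def₁ : ∀ a b c, D a b → D (add a b) c → D b c
  assoc_def₂ : ∀ a b c, D a b → D (add a b) c → D a (add b c)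
  assoc : ∀ a b c, D a b → D (add a b) c → add (add a b) c = add a (add b c)
  orth_exists : ∀ a, ∃! b, D a b ∧ add a b = one
  add_one : ∀ a, D a one → a = zero

namespace EffectAlgebra

variable {α : Type*}
open Classical

/-- The induced order: `a ≤ b` iff `∃ c, a ⊕ c = b`. -/
def le (E : EffectAlgebra α) (a b : α) : Prop := ∃ c, E.D a c ∧ E.add a c = b

/-- The orthosupplement `a'`. -/
noncomputable def orth (E : EffectAlgebra α) (a : α) : α := (E.orth_exists a).choose

/-- Partial difference: `sub b a = b ⊖ a`, intended for `a ≤ b`. -/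
noncomputable def sub (E : EffectAlgebra α) (b a : α) : α :=
  if h : ∃ c, E.D a c ∧ E.add a c = b then h.choose else E.zero

end EffectAlgebra

section BGpair

variable {α : Type*} [BooleanAlgebra α]

/-- `L(a,b) = {a ∧ f(b) : f ∈ G}`. -/
def Lset (G : Subgroup (α ≃o α)) (a b : α) : Set α := {x | ∃ f ∈ G, x = a ⊓ f b}

/-- `L⁺(a,b) = {g(a) ∧ f(b) : f, g ∈ G}`. -/
def Lplus (G : Subgroup (α ≃o α)) (a b : α) : Set α :=
  {x | ∃ f ∈ G, ∃ g ∈ G, x = g a ⊓ f b}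

/-- Condition (MVP1). -/
def MVP1 (G : Subgroup (α ≃o α)) : Prop :=
  ∀ (a b : α) (f : α ≃o α), f ∈ G → a ≤ b → f a ≤ b →
    ∃ h ∈ G, h a = f a ∧ h b = b

/-- Condition (MVP2): every element of `L(a,b)` lies below a maximal element of `L(a,b)`. -/
def MVP2 (G : Subgroup (α ≃o α)) : Prop :=
  ∀ (a b x : α), x ∈ Lset G a b →
    ∃ m ∈ Lset G a b, x ≤ m ∧ ∀ y ∈ Lset G a b, m ≤ y → y = m

/-- The equivalence `a ∼_G b` iff `f(a) = b` for some `f ∈ G`. -/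
def rG (G : Subgroup (α ≃o α)) (a b : α) : Prop := ∃ f ∈ G, f a = b

end BGpair

/-- Key lemma: a maximal element of `L(a,b)` absorbs anything above it in `L⁺(a,b)`. -/
lemma max_Lset_absorbs {α : Type*} [BooleanAlgebra α] (G : Subgroup (α ≃o α))
    (h1 : MVP1 G) (a b m : α) (hm : m ∈ Lset G a b)
    (hmax : ∀ y ∈ Lset G a b, m ≤ y → y = m)
    (g' f' : α ≃o α) (hg' : g' ∈ G) (hf' : f' ∈ G)
    (hle : m ≤ g' a ⊓ f' b) : g' a ⊓ f' b = m := by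
  obtain ⟨f₀, hf₀, hmeq⟩ := hm
  have hma : m ≤ a := hmeq ▸ inf_le_left
  have h1a : g'⁻¹ m ≤ a := by
    have hmg : m ≤ g' a := le_trans hle inf_le_left
    have := (g'⁻¹ : α ≃o α).monotone hmg
    simpa using this
  obtain ⟨h, hhG, hh1, hh2⟩ := h1 m a g'⁻¹ (inv_mem hg') hma h1a
  set k : α ≃o α := h⁻¹ * g'⁻¹ with hk
  have hkG : k ∈ G := mul_mem (inv_mem hhG) (inv_mem hg')
  have hkm : k m = m := by
    show h⁻¹ (g'⁻¹ m) = m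
    rw [← hh1]; simp
  have hka : k (g' a) = a := by
    show h⁻¹ (g'⁻¹ (g' a)) = a
    have : h⁻¹ a = a := by conv_lhs => rw [← hh2]; simp
    simpa using this
  have hky : k (g' a ⊓ f' b) = a ⊓ (k * f') b := by
    rw [map_inf, hka]; rfl
  have hin : a ⊓ (k * f') b ∈ Lset G a b := ⟨k * f', mul_mem hkG hf', rfl⟩
  have hle2 : m ≤ a ⊓ (k * f') b := by
    rw [← hky]
    calc m = k m := hkm.symm
    _ ≤ k (g' a ⊓ f' b) := k.monotone hle
  have hEq := hmax _ hin hle2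
  have : k (g' a ⊓ f' b) = k m := by rw [hky, hEq, hkm]
  exact k.injective this

/-- in an MV-pair, every element of `L⁺(a,b)` lies below a maximal element
of `L⁺(a,b)`. -/
theorem stmt9 {α : Type*} [BooleanAlgebra α] (G : Subgroup (α ≃o α))
    (h1 : MVP1 G) (h2 : MVP2 G) (a b : α) :
    ∀ x ∈ Lplus G a b, ∃ m ∈ Lplus G a b, x ≤ m ∧ ∀ y ∈ Lplus G a b, m ≤ y → y = m := by
  rintro x ⟨f, hf, g, hg, rfl⟩
  -- pull back by `g⁻¹` into `L(a,b)`
  have hx0 : a ⊓ (g⁻¹ * f) b ∈ Lset G a b := ⟨g⁻¹ * f, mul_mem (inv_mem hg) hf, rfl⟩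
  obtain ⟨m₀, hm₀, hxle, hm₀max⟩ := h2 a b _ hx0
  refine ⟨g m₀, ?_, ?_, ?_⟩
  · obtain ⟨f₀, hf₀, rfl⟩ := hm₀
    exact ⟨g * f₀, mul_mem hg hf₀, g, hg, by rw [map_inf]; rfl⟩
  · have := g.monotone hxle
    have hgx : g (a ⊓ (g⁻¹ * f) b) = g a ⊓ f b := by
      rw [map_inf]
      congr 1
      show g (g⁻¹ (f b)) = f b
      simp
    rw [hgx] at this
    exact this
  · rintro y ⟨f₂, hf₂, g₂, hg₂, rfl⟩
    intro hle
    have hle' : m₀ ≤ (g⁻¹ * g₂) a ⊓ (g⁻¹ * f₂) b := by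
      have := (g⁻¹ : α ≃o α).monotone hle
      rw [map_inf] at this
      simpa using this
    have key := max_Lset_absorbs G h1 a b m₀ hm₀ hm₀max (g⁻¹ * g₂) (g⁻¹ * f₂)
      (mul_mem (inv_mem hg) hg₂) (mul_mem (inv_mem hg) hf₂) hle'
    rw [← key, map_inf]
    show g₂ a ⊓ f₂ b = g (g⁻¹ (g₂ a)) ⊓ g (g⁻¹ (f₂ b))
    simp
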